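/- A convex set F ⊆ ℝⁿ has no f-asymptotes if and only if T(F) is closed for every affine map T. -/

import Mathlib

open Pointwise

noncomputable section

/-- A quadratic function on a real vector space. -/
def IsQuadratic {E : Type*} [AddCommGroup E] [Module ℝ E] (f : E → ℝ) : Prop :=
  ∃ (B : E →ₗ[ℝ] E →ₗ[ℝ] ℝ) (l : E →ₗ[ℝ] ℝ) (c : ℝ), ∀ x, f x = B x x + l x + c

/-- An affine subspace `M` is an f-asymptote of `F` if it is nonempty, disjoint
from `F`, and at zero distance from `F`. -/
def IsFAsymptote {E : Type*} [NormedAddCommGroup E] [NormedSpace ℝ E]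
    (M : AffineSubspace ℝ E) (F : Set E) : Prop :=
  (M : Set E).Nonempty ∧ F ∩ (M : Set E) = ∅ ∧
    ∀ ε : ℝ, 0 < ε → ∃ x ∈ F, ∃ y ∈ (M : Set E), dist x y < ε

/-- The range of an affine map between finite-dimensional spaces is closed. -/
lemma affineMap_range_closed {n m : ℕ}
    (T : EuclideanSpace ℝ (Fin n) →ᵃ[ℝ] EuclideanSpace ℝ (Fin m)) :
    IsClosed (Set.range ⇑T) := by
  have hde : ∀ x, T x = T.linear x + T 0 := fun x => by
    conv_lhs => rw [AffineMap.decomp]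
    rfl
  have hre : Set.range ⇑T
      = (· + T 0) '' (LinearMap.range T.linear : Set (EuclideanSpace ℝ (Fin m))) := by
    ext z
    simp only [Set.mem_range, Set.mem_image, SetLike.mem_coe, LinearMap.mem_range]
    constructor
    · rintro ⟨x, rfl⟩; exact ⟨T.linear x, ⟨x, rfl⟩, (hde x).symm⟩
    · rintro ⟨w, ⟨x, rfl⟩, rfl⟩; exact ⟨x, hde x⟩
  rw [hre]
  exact (Homeomorph.addRight (T 0)).isClosedMap _
    (Submodule.closed_of_finiteDimensional _)

set_option maxHeartbeats 1000000 in
theorem no_asymptote_iff_affine_images_closed {n : ℕ}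
    (F : Set (EuclideanSpace ℝ (Fin n))) (hconv : Convex ℝ F) (hcl : IsClosed F) :
    (∀ M : AffineSubspace ℝ (EuclideanSpace ℝ (Fin n)), ¬ IsFAsymptote M F) ↔
      (∀ (m : ℕ) (T : EuclideanSpace ℝ (Fin n) →ᵃ[ℝ] EuclideanSpace ℝ (Fin m)),
        IsClosed (T '' F)) := by
  constructor
  · -- no asymptotes → images closed
    intro h m T
    refine isClosed_of_closure_subset ?_
    intro y hy
    by_contra hy'
    set L := T.linear with hL
    have hde : ∀ x, T x = L x + T 0 := fun x => by
      conv_lhs => rw [AffineMap.decomp]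
      rfl
    -- y is in the range of T
    have hyr : y ∈ Set.range ⇑T := by
      have : closure (⇑T '' F) ⊆ Set.range ⇑T :=
        (affineMap_range_closed T).closure_subset_iff.mpr (Set.image_subset_range _ _)
      exact this hy
    obtain ⟨a, ha⟩ := hyr
    -- bounded right inverse of L on its range
    obtain ⟨g, hg⟩ := LinearMap.exists_rightInverse_of_surjective L.rangeRestrict
      (LinearMap.range_rangeRestrict L)
    have hgL : ∀ w : LinearMap.range L, L (g w) = (w : EuclideanSpace ℝ (Fin m)) := by
      intro w
      have := LinearMap.congr_fun hg w
      simpa using congrArg Subtype.val this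
    set G := LinearMap.toContinuousLinearMap g with hG
    -- the candidate asymptote
    set M : AffineSubspace ℝ (EuclideanSpace ℝ (Fin n)) :=
      AffineSubspace.comap T (AffineSubspace.mk' y ⊥) with hM
    have hmemM : ∀ x, x ∈ M ↔ T x = y := by
      intro x
      rw [hM, AffineSubspace.mem_comap, AffineSubspace.mem_mk']
      simp [vsub_eq_sub, sub_eq_zero]
    refine h M ⟨⟨a, (hmemM a).mpr ha⟩, ?_, ?_⟩
    · ext x
      simp only [Set.mem_inter_iff, Set.mem_empty_iff_false, iff_false, not_and,
        SetLike.mem_coe]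
      intro hxF hxM
      exact hy' ⟨x, hxF, (hmemM x).mp hxM⟩
    · intro ε hε
      have hδ : 0 < ε / (‖G‖ + 1) := by positivity
      obtain ⟨z, hz, hdz⟩ := Metric.mem_closure_iff.mp hy _ hδ
      obtain ⟨x, hxF, rfl⟩ := hz
      have hwr : y - T x ∈ LinearMap.range L := by
        refine ⟨a - x, ?_⟩
        have := AffineMap.linearMap_vsub T a x
        rw [vsub_eq_sub, vsub_eq_sub] at this
        rw [this, ha]
      set w : LinearMap.range L := ⟨y - T x, hwr⟩ with hw
      refine ⟨x, hxF, x + g w, ?_, ?_⟩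
      · show x + g w ∈ M
        rw [hmemM]
        have : T (g w +ᵥ x) = L (g w) +ᵥ T x := T.map_vadd x (g w)
        rw [vadd_eq_add, vadd_eq_add] at this
        rw [add_comm, this, hgL]
        simp [hw]
      · rw [dist_self_add_right]
        have h1 : ‖g w‖ ≤ ‖G‖ * ‖w‖ := G.le_opNorm w
        have h2 : ‖w‖ = dist y (T x) := by
          rw [dist_eq_norm]
          rfl
        have h3 : ‖G‖ * ‖w‖ < ε := by
          rw [h2]
          have hGnn : 0 ≤ ‖G‖ := ContinuousLinearMap.opNorm_nonneg G
          have h4 : dist y (T x) * (‖G‖ + 1) < ε := by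
            rwa [lt_div_iff₀ (by positivity)] at hdz
          nlinarith [dist_nonneg (x := y) (y := T x)]
        linarith
  · -- images closed → no asymptotes
    intro h M hM
    obtain ⟨⟨p, hp⟩, hdisj, hclose⟩ := hM
    set V := M.direction with hV
    set K := Vᗮ with hK
    set m := Module.finrank ℝ K with hm
    set φ := (stdOrthonormalBasis ℝ K).repr with hφ
    set P := Submodule.orthogonalProjectionOnto K with hP
    set f : EuclideanSpace ℝ (Fin n) →ₗ[ℝ] EuclideanSpace ℝ (Fin m) :=
      (φ.toLinearEquiv : K →ₗ[ℝ] EuclideanSpace ℝ (Fin m)) ∘ₗ (P : EuclideanSpace ℝ (Fin n) →ₗ[ℝ] K)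
      with hf
    set T := f.toAffineMap with hT
    have hTx : ∀ x, T x = φ (P x) := fun x => rfl
    -- membership criterion
    have hkey : ∀ x, T x = T p ↔ x ∈ M := by
      intro x
      rw [hTx, hTx]
      constructor
      · intro hx
        have h1 : P (x - p) = 0 := by
          have := φ.injective hx
          rw [map_sub, this, sub_self]
        have h2 : x - p ∈ Kᗮ := Submodule.orthogonalProjectionOnto_eq_zero_iff.mp h1
        rw [hK, Submodule.orthogonal_orthogonal] at h2
        have := (M.vsub_right_mem_direction_iff_mem hp x).mp (by rwa [vsub_eq_sub])
        exact this
      · intro hx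
        have h2 : x - p ∈ V := by
          have := (M.vsub_right_mem_direction_iff_mem hp x).mpr hx
          rwa [vsub_eq_sub] at this
        have h3 : x - p ∈ Kᗮ := by rw [hK, Submodule.orthogonal_orthogonal]; exact h2
        have h1 : P (x - p) = 0 := Submodule.orthogonalProjectionOnto_eq_zero_iff.mpr h3
        rw [map_sub] at h1
        rw [sub_eq_zero] at h1
        rw [h1]
    -- T p is in the closure of T '' F
    have hmem : T p ∈ closure (⇑T '' F) := by
      rw [Metric.mem_closure_iff]
      intro ε hε
      obtain ⟨x, hxF, q, hqM, hdq⟩ := hclose ε hε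
      refine ⟨T x, ⟨x, hxF, rfl⟩, ?_⟩
      have hTq : T q = T p := (hkey q).mpr hqM
      have : dist (T p) (T x) = dist (T q) (T x) := by rw [hTq]
      rw [this]
      calc dist (T q) (T x) = ‖φ (P q) - φ (P x)‖ := by rw [hTx, hTx, dist_eq_norm]
        _ = ‖φ (P q - P x)‖ := by rw [map_sub]
        _ = ‖P q - P x‖ := φ.norm_map _
        _ = ‖P (q - x)‖ := by rw [map_sub]
        _ ≤ ‖P‖ * ‖q - x‖ := P.le_opNorm _
        _ ≤ 1 * ‖q - x‖ := by
            have := Submodule.orthogonalProjectionOnto_norm_le K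
            have : ‖P‖ ≤ 1 := this
            nlinarith [norm_nonneg (q - x)]
        _ = ‖q - x‖ := one_mul _
        _ = dist q x := (dist_eq_norm q x).symm
        _ < ε := by rwa [dist_comm] at hdq
    have hTp : T p ∈ ⇑T '' F := (h m T).closure_subset_iff.mpr subset_rfl hmem
    obtain ⟨x, hxF, hTxp⟩ := hTp
    have hxM : x ∈ M := (hkey x).mp hTxp
    have : x ∈ F ∩ (M : Set (EuclideanSpace ℝ (Fin n))) := ⟨hxF, hxM⟩
    rw [hdisj] at this
    exact this
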